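/- arXiv:1112.1590 — 3 statements merged into one kernel-verified Lean document; each statement's English description precedes it below -/
import Mathlib

section
/- Let β be continuous nonnegative on [0,∞) with ∫₀^∞ β = ∞, and suppose a population density p(t,a) = p̄₀(a-t)·exp(-∫₀^t β(a-s)ds) for t, a ≥ 0 (extending p̄₀ and β by 0 on negatives), where p̄₀ ≥ 0 is integrable and supported in [0, t₀], and β(a) = 0 for a ∈ [0, t₀]. Define C_T = ∫₀^∞∫₀^T β(a)p(t,a) dt da. Then C_T → ∫₀^∞ p̄₀(a)da as T → ∞. -/
open MeasureTheory Filter Set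

theorem total_divisions_converges
    (β p0 : ℝ → ℝ) (t0 : ℝ) (ht0 : 0 < t0)
    (hβc : Continuous β) (hβnn : ∀ a, 0 ≤ β a)
    (hβdiv : Tendsto (fun a => ∫ x in (0:ℝ)..a, β x) atTop atTop)
    (hβ0 : ∀ a, a ≤ t0 → β a = 0)
    (hp0int : Integrable p0) (hp0nn : ∀ a, 0 ≤ p0 a)
    (hp0supp : ∀ a, a < 0 ∨ t0 < a → p0 a = 0)
    (p : ℝ → ℝ → ℝ)
    (hp : ∀ t a, p t a = p0 (a - t) * Real.exp (-∫ s in (0:ℝ)..t, β (a - s))) :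
    Tendsto (fun T => ∫ a in Set.Ioi (0:ℝ), ∫ t in (0:ℝ)..T, β a * p t a)
      atTop (nhds (∫ a in Set.Ioi (0:ℝ), p0 a)) := by
  have hβint : ∀ a b : ℝ, IntervalIntegrable β volume a b := fun a b =>
    hβc.intervalIntegrable a b
  have hp0ii : ∀ a b : ℝ, IntervalIntegrable p0 volume a b := fun a b =>
    hp0int.intervalIntegrable
  -- pointwise simplification of the integrand in t
  have hptw : ∀ a t : ℝ, β a * p t a
      = β a * Real.exp (-∫ x in (0:ℝ)..a, β x) * p0 (a - t) := by
    intro a t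
    rw [hp t a]
    by_cases h0 : p0 (a - t) = 0
    · rw [h0]; ring
    · have hr : ¬(a - t < 0 ∨ t0 < a - t) := fun h => h0 (hp0supp _ h)
      push_neg at hr
      obtain ⟨hr1, hr2⟩ := hr
      have hr1' : 0 ≤ a - t := hr1
      have hr2' : a - t ≤ t0 := hr2
      have h1 : (∫ s in (0:ℝ)..t, β (a - s)) = ∫ u in (a - t)..a, β u := by
        simpa using intervalIntegral.integral_comp_sub_left β a
      have h2 : (∫ u in (0:ℝ)..(a - t), β u) = 0 := by
        have hz : EqOn β (fun _ => (0:ℝ)) (Set.uIcc 0 (a - t)) := by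
          intro x hx
          rw [Set.uIcc_of_le hr1'] at hx
          exact hβ0 x (le_trans hx.2 hr2')
        rw [intervalIntegral.integral_congr hz, intervalIntegral.integral_zero]
      have h3 := intervalIntegral.integral_add_adjacent_intervals
        (hβint 0 (a - t)) (hβint (a - t) a)
      rw [h2, zero_add] at h3
      rw [h1, h3]
      ring
  -- closed form of the inner integral
  have key : ∀ T : ℝ, ∀ a : ℝ, (∫ t in (0:ℝ)..T, β a * p t a)
      = β a * Real.exp (-∫ x in (0:ℝ)..a, β x) * ∫ u in (a - T)..a, p0 u := by
    intro T a
    have h1 : (∫ t in (0:ℝ)..T, β a * p t a)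
        = ∫ t in (0:ℝ)..T, β a * Real.exp (-∫ x in (0:ℝ)..a, β x) * p0 (a - t) :=
      intervalIntegral.integral_congr (fun t _ => hptw a t)
    rw [h1, intervalIntegral.integral_const_mul,
      intervalIntegral.integral_comp_sub_left p0 a, sub_zero]
  have hfun : ∀ T : ℝ, (∫ a in Set.Ioi (0:ℝ), ∫ t in (0:ℝ)..T, β a * p t a)
      = ∫ a in Set.Ioi (0:ℝ),
          β a * Real.exp (-∫ x in (0:ℝ)..a, β x) * ∫ u in (a - T)..a, p0 u := by
    intro T
    exact integral_congr_ae (Filter.Eventually.of_forall (fun a => key T a))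
  simp only [hfun]
  -- derivative facts
  have hBd : ∀ x : ℝ, HasDerivAt (fun y => ∫ u in (0:ℝ)..y, β u) (β x) x := fun x =>
    intervalIntegral.integral_hasDerivAt_right (hβint 0 x)
      (hβc.stronglyMeasurable.stronglyMeasurableAtFilter) hβc.continuousAt
  have hgd : ∀ x : ℝ, HasDerivAt (fun y => -Real.exp (-∫ u in (0:ℝ)..y, β u))
      (β x * Real.exp (-∫ u in (0:ℝ)..x, β u)) x := by
    intro x
    have h : HasDerivAt (fun y => -Real.exp (-∫ u in (0:ℝ)..y, β u))
        (-(Real.exp (-∫ u in (0:ℝ)..x, β u) * -β x)) x := (((hBd x).neg).exp).neg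
    convert h using 1
    ring
  have hgl : Tendsto (fun y => -Real.exp (-∫ u in (0:ℝ)..y, β u)) atTop (nhds 0) := by
    have h : Tendsto (fun y => Real.exp (-∫ u in (0:ℝ)..y, β u)) atTop (nhds 0) :=
      Real.tendsto_exp_neg_atTop_nhds_zero.comp hβdiv
    simpa using h.neg
  have hcnn : ∀ x : ℝ, 0 ≤ β x * Real.exp (-∫ u in (0:ℝ)..x, β u) := fun x =>
    mul_nonneg (hβnn x) (Real.exp_pos _).le
  -- integrability of the density β e^{-B} on Ioi 0 and its total integral
  have hcint : IntegrableOn (fun x => β x * Real.exp (-∫ u in (0:ℝ)..x, β u))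
      (Set.Ioi (0:ℝ)) :=
    integrableOn_Ioi_deriv_of_nonneg' (a := (0:ℝ)) (fun x _ => hgd x) (fun x _ => hcnn x) hgl
  have hcval : (∫ x in Set.Ioi (0:ℝ), β x * Real.exp (-∫ u in (0:ℝ)..x, β u)) = 1 := by
    have h := integral_Ioi_of_hasDerivAt_of_nonneg' (a := (0:ℝ)) (fun x _ => hgd x)
      (fun x _ => hcnn x) hgl
    rw [h]
    simp [intervalIntegral.integral_same]
  set M : ℝ := ∫ x, p0 x with hMdef
  -- ∫_{Ioi 0} p0 = M
  have hM : (∫ a in Set.Ioi (0:ℝ), p0 a) = M := by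
    have h0 : ∀ᵐ x : ℝ, x ∈ Set.Iic (0:ℝ) → p0 x = 0 := by
      filter_upwards [compl_mem_ae_iff.2 (measure_singleton (0:ℝ))] with x hx hxle
      have hxne : x ≠ 0 := by simpa using hx
      exact hp0supp x (Or.inl (lt_of_le_of_ne hxle hxne))
    have h1 : (∫ x in Set.Iic (0:ℝ), p0 x) = 0 :=
      integral_eq_zero_of_ae ((ae_restrict_iff' measurableSet_Iic).2 h0)
    have h2 := intervalIntegral.integral_Iic_add_Ioi (b := (0:ℝ)) hp0int.integrableOn hp0int.integrableOn
    rw [h1, zero_add] at h2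
    exact h2
  -- the limit integrand
  have hfinal : (∫ a in Set.Ioi (0:ℝ),
      β a * Real.exp (-∫ x in (0:ℝ)..a, β x) * M) = ∫ a in Set.Ioi (0:ℝ), p0 a := by
    rw [integral_mul_const, hcval, one_mul, hM]
  rw [← hfinal]
  -- dominated convergence
  apply tendsto_integral_filter_of_dominated_convergence
    (fun a => β a * Real.exp (-∫ u in (0:ℝ)..a, β u) * M)
  · -- measurability
    filter_upwards with T
    have hc1 : Continuous fun a : ℝ => β a * Real.exp (-∫ u in (0:ℝ)..a, β u) := by
      exact hβc.mul ((intervalIntegral.continuous_primitive hβint 0).neg.rexp)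
    have hc2 : Continuous fun a : ℝ => ∫ u in (a - T)..a, p0 u := by
      have heq : (fun a : ℝ => ∫ u in (a - T)..a, p0 u)
          = fun a : ℝ => (∫ u in (0:ℝ)..a, p0 u) - ∫ u in (0:ℝ)..(a - T), p0 u := by
        funext a
        rw [intervalIntegral.integral_interval_sub_left (hp0ii 0 a) (hp0ii 0 (a - T))]
      rw [heq]
      exact (intervalIntegral.continuous_primitive hp0ii 0).sub
        ((intervalIntegral.continuous_primitive hp0ii 0).comp
          (continuous_id.sub continuous_const))
    exact (hc1.mul hc2).aestronglyMeasurable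
  · -- bound
    filter_upwards [eventually_ge_atTop (0:ℝ)] with T hT
    refine ae_of_all _ (fun a => ?_)
    have hle : a - T ≤ a := by linarith
    have hInn : 0 ≤ ∫ u in (a - T)..a, p0 u := by
      rw [intervalIntegral.integral_of_le hle]
      exact setIntegral_nonneg measurableSet_Ioc (fun x _ => hp0nn x)
    have hIle : (∫ u in (a - T)..a, p0 u) ≤ M := by
      rw [intervalIntegral.integral_of_le hle]
      exact setIntegral_le_integral hp0int (ae_of_all _ hp0nn)
    have hnn : 0 ≤ β a * Real.exp (-∫ u in (0:ℝ)..a, β u) * ∫ u in (a - T)..a, p0 u :=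
      mul_nonneg (hcnn a) hInn
    rw [Real.norm_eq_abs, abs_of_nonneg hnn]
    exact mul_le_mul_of_nonneg_left hIle (hcnn a)
  · -- bound integrable
    exact hcint.mul_const M
  · -- pointwise limit
    refine (ae_restrict_iff' measurableSet_Ioi).2 (ae_of_all _ (fun a ha => ?_))
    by_cases hat : a ≤ t0
    · have hz : β a = 0 := hβ0 a hat
      simp only [hz, zero_mul]
      exact tendsto_const_nhds
    · push_neg at hat
      have hev : ∀ᶠ T in atTop,
          β a * Real.exp (-∫ u in (0:ℝ)..a, β u) * M
          = β a * Real.exp (-∫ u in (0:ℝ)..a, β u) * ∫ u in (a - T)..a, p0 u := by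
        filter_upwards [eventually_gt_atTop a] with T hT
        congr 1
        symm
        apply intervalIntegral.integral_eq_integral_of_support_subset
        intro x hx
        have hx0 : ¬(x < 0 ∨ t0 < x) := fun h => hx (hp0supp x h)
        push_neg at hx0
        constructor
        · linarith [hx0.1]
        · linarith [hx0.2]
      exact tendsto_const_nhds.congr' hev
end

section
/- Let β be continuous nonnegative on [0,∞) with ∫₀^∞ β = ∞ and β(a) = 0 for a ∈ [0,t₀]. Let p̄₀ ≥ 0 be integrable with support in [0,t₀] and ∫ p̄₀ > 0, and let p(t,a) = p̄₀(a-t)·exp(-∫₀^t β(a-s)ds). Define I_T(a) = C_T⁻¹ ∫₀^T β(a)p(t,a)dt with C_T = ∫₀^∞∫₀^T β(a)p(t,a)dt da, and I_∞(a) = β(a)·exp(-∫₀^a β(a')da'). Then ∫₀^∞ |I_T(a) - I_∞(a)| da → 0 as T → ∞. -/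
open MeasureTheory Filter Set

theorem imt_distribution_L1_convergence
    (β p0 : ℝ → ℝ) (t0 : ℝ) (ht0 : 0 < t0)
    (hβc : Continuous β) (hβnn : ∀ a, 0 ≤ β a)
    (hβdiv : Tendsto (fun a => ∫ x in (0:ℝ)..a, β x) atTop atTop)
    (hβ0 : ∀ a, a ≤ t0 → β a = 0)
    (hp0int : Integrable p0) (hp0nn : ∀ a, 0 ≤ p0 a)
    (hp0supp : ∀ a, a < 0 ∨ t0 < a → p0 a = 0)
    (hp0pos : 0 < ∫ a in Set.Ioi (0:ℝ), p0 a)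
    (p : ℝ → ℝ → ℝ)
    (hp : ∀ t a, p t a = p0 (a - t) * Real.exp (-∫ s in (0:ℝ)..t, β (a - s))) :
    Tendsto (fun T => ∫ a in Set.Ioi (0:ℝ),
        |(∫ x in Set.Ioi (0:ℝ), ∫ t in (0:ℝ)..T, β x * p t x)⁻¹ *
            (∫ t in (0:ℝ)..T, β a * p t a)
          - β a * Real.exp (-∫ x in (0:ℝ)..a, β x)|)
      atTop (nhds 0) := by
  have hβii : ∀ u v : ℝ, IntervalIntegrable β volume u v := fun u v =>
    hβc.intervalIntegrable u v
  have hp0ii : ∀ u v : ℝ, IntervalIntegrable p0 volume u v := fun _ _ =>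
    hp0int.intervalIntegrable
  -- key pointwise identity
  have key : ∀ T a : ℝ, (∫ t in (0:ℝ)..T, β a * p t a)
      = (β a * Real.exp (-∫ x in (0:ℝ)..a, β x)) * ∫ x in (a - T)..a, p0 x := by
    intro T a
    have h1 : ∀ t : ℝ, β a * p t a
        = (β a * Real.exp (-∫ x in (0:ℝ)..a, β x)) * p0 (a - t) := by
      intro t
      rw [hp]
      by_cases h0 : p0 (a - t) = 0
      · simp [h0]
      · have hmem : ¬(a - t < 0 ∨ t0 < a - t) := fun h => h0 (hp0supp _ h)
        push_neg at hmem
        obtain ⟨h1', h2'⟩ := hmem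
        have hsub : (∫ s in (0:ℝ)..t, β (a - s)) = ∫ x in (a - t)..a, β x := by
          rw [intervalIntegral.integral_comp_sub_left (fun x => β x) a]
          norm_num
        have hz : (∫ x in (0:ℝ)..(a - t), β x) = 0 := by
          rw [intervalIntegral.integral_congr (g := fun _ => (0:ℝ))
            (fun x hx => hβ0 x (le_trans hx.2 (max_le ht0.le h2')))]
          simp
        have hadd : (∫ x in (0:ℝ)..(a - t), β x) + (∫ x in (a - t)..a, β x)
            = ∫ x in (0:ℝ)..a, β x :=
          intervalIntegral.integral_add_adjacent_intervals (hβii _ _) (hβii _ _)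
        have hEq : (∫ s in (0:ℝ)..t, β (a - s)) = ∫ x in (0:ℝ)..a, β x := by
          rw [hsub, ← hadd, hz, zero_add]
        rw [hEq]; ring
    rw [intervalIntegral.integral_congr (fun t _ => h1 t),
      intervalIntegral.integral_const_mul]
    congr 1
    rw [intervalIntegral.integral_comp_sub_left p0 a]
    norm_num
  simp only [key]
  -- notation facts
  set M : ℝ := ∫ x, p0 x with hMdef
  have hne0 : ∀ᵐ x : ℝ, x ≠ (0:ℝ) := by
    have h0 : (volume : Measure ℝ) {(0:ℝ)} = 0 := measure_singleton 0
    rw [ae_iff]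
    simpa [not_not, Set.setOf_eq_eq_singleton] using h0
  have hMeq : (∫ x in Ioi (0:ℝ), p0 x) = M := by
    refine setIntegral_eq_integral_of_ae_compl_eq_zero ?_
    filter_upwards [hne0] with x hx hxs
    exact hp0supp x (Or.inl (lt_of_le_of_ne (not_lt.1 (fun h => hxs h)) hx))
  have hMpos : 0 < M := hMeq ▸ hp0pos
  -- the limit density I∞ and its integral
  have hBder : ∀ a : ℝ, HasDerivAt (fun u => ∫ x in (0:ℝ)..u, β x) (β a) a := fun a =>
    (hβc.integral_hasStrictDerivAt 0 a).hasDerivAt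
  have hderiv : ∀ x ∈ Ici (0:ℝ),
      HasDerivAt (fun u => -Real.exp (-∫ y in (0:ℝ)..u, β y))
        (β x * Real.exp (-∫ y in (0:ℝ)..x, β y)) x := by
    intro x _
    have := (((hBder x).neg).exp).neg
    simp only [Pi.neg_def] at this
    exact this.congr_deriv (by ring)
  have hgtend : Tendsto (fun u => -Real.exp (-∫ y in (0:ℝ)..u, β y)) atTop (nhds 0) := by
    have h1 : Tendsto (fun u => -∫ y in (0:ℝ)..u, β y) atTop atBot :=
      tendsto_neg_atBot_iff.2 hβdiv
    have h2 : Tendsto (fun u => Real.exp (-∫ y in (0:ℝ)..u, β y)) atTop (nhds 0) :=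
      Real.tendsto_exp_atBot.comp h1
    simpa using h2.neg
  have hInn : ∀ x ∈ Ioi (0:ℝ), 0 ≤ β x * Real.exp (-∫ y in (0:ℝ)..x, β y) := fun x _ =>
    mul_nonneg (hβnn x) (Real.exp_pos _).le
  have hIint : IntegrableOn (fun a => β a * Real.exp (-∫ y in (0:ℝ)..a, β y)) (Ioi 0) :=
    integrableOn_Ioi_deriv_of_nonneg' hderiv hInn hgtend
  have hIone : (∫ a in Ioi (0:ℝ), β a * Real.exp (-∫ y in (0:ℝ)..a, β y)) = 1 := by
    rw [integral_Ioi_of_hasDerivAt_of_nonneg' hderiv hInn hgtend]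
    simp
  -- F facts
  have hFnn : ∀ T : ℝ, 0 ≤ T → ∀ a : ℝ, 0 ≤ ∫ x in (a - T)..a, p0 x := fun T hT a =>
    intervalIntegral.integral_nonneg (by linarith) (fun x _ => hp0nn x)
  have hFle : ∀ T : ℝ, 0 ≤ T → ∀ a : ℝ, (∫ x in (a - T)..a, p0 x) ≤ M := by
    intro T hT a
    rw [intervalIntegral.integral_of_le (by linarith)]
    exact setIntegral_le_integral hp0int (Eventually.of_forall hp0nn)
  have hFeq : ∀ a : ℝ, t0 < a → ∀ T : ℝ, a + 1 ≤ T → (∫ x in (a - T)..a, p0 x) = M := by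
    intro a ha T hT
    have h0a : 0 < a := lt_trans ht0 ha
    rw [intervalIntegral.integral_of_le (by linarith)]
    refine setIntegral_eq_integral_of_forall_compl_eq_zero (fun x hx => ?_)
    simp only [Set.mem_Ioc, not_and, not_le] at hx
    by_cases hxl : a - T < x
    · exact hp0supp x (Or.inr (lt_trans ha (hx hxl)))
    · exact hp0supp x (Or.inl (by push_neg at hxl; linarith))
  -- pointwise convergence of the numerator
  have hglim : ∀ a ∈ Ioi (0:ℝ),
      Tendsto (fun T => (β a * Real.exp (-∫ x in (0:ℝ)..a, β x)) * ∫ x in (a - T)..a, p0 x)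
        atTop (nhds ((β a * Real.exp (-∫ x in (0:ℝ)..a, β x)) * M)) := by
    intro a _
    by_cases ha : t0 < a
    · refine tendsto_const_nhds.congr' ?_
      filter_upwards [eventually_ge_atTop (a + 1)] with T hT
      rw [hFeq a ha T hT]
    · push_neg at ha
      simp [hβ0 a ha]
  -- convergence of the normalizing constant
  have hc : Tendsto (fun T => ∫ x in Ioi (0:ℝ),
      (β x * Real.exp (-∫ y in (0:ℝ)..x, β y)) * ∫ y in (x - T)..x, p0 y)
      atTop (nhds M) := by
    have hlim := tendsto_integral_filter_of_dominated_convergence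
      (μ := volume.restrict (Ioi (0:ℝ))) (l := (atTop : Filter ℝ))
      (F := fun (T : ℝ) x => (β x * Real.exp (-∫ y in (0:ℝ)..x, β y)) * ∫ y in (x - T)..x, p0 y)
      (f := fun x => (β x * Real.exp (-∫ y in (0:ℝ)..x, β y)) * M)
      (bound := fun x => (β x * Real.exp (-∫ y in (0:ℝ)..x, β y)) * M)
      ?_ ?_ ?_ ?_
    · have : (∫ x in Ioi (0:ℝ), (β x * Real.exp (-∫ y in (0:ℝ)..x, β y)) * M) = M := by
        rw [integral_mul_const, hIone, one_mul]
      rwa [this] at hlim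
    · refine Eventually.of_forall (fun T => ?_)
      have hcont : Continuous (fun x =>
          (β x * Real.exp (-∫ y in (0:ℝ)..x, β y)) * ∫ y in (x - T)..x, p0 y) := by
        have hP : Continuous (fun u => ∫ y in (0:ℝ)..u, p0 y) :=
          intervalIntegral.continuous_primitive hp0ii 0
        have hBc : Continuous (fun u => ∫ y in (0:ℝ)..u, β y) :=
          intervalIntegral.continuous_primitive hβii 0
        have hFrepr : ∀ x : ℝ, (∫ y in (x - T)..x, p0 y)
            = (∫ y in (0:ℝ)..x, p0 y) - ∫ y in (0:ℝ)..(x - T), p0 y := by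
          intro x
          rw [← intervalIntegral.integral_add_adjacent_intervals (hp0ii (x - T) 0) (hp0ii 0 x),
            intervalIntegral.integral_symm 0 (x - T)]
          ring
        simp only [hFrepr]
        exact (hβc.mul (Real.continuous_exp.comp hBc.neg)).mul
          (hP.sub (hP.comp (continuous_id.sub continuous_const)))
      exact hcont.aestronglyMeasurable
    · filter_upwards [eventually_ge_atTop (0:ℝ)] with T hT
      refine (ae_restrict_iff' measurableSet_Ioi).2 (Eventually.of_forall (fun x hx => ?_))
      have h1 : 0 ≤ β x * Real.exp (-∫ y in (0:ℝ)..x, β y) := hInn x hx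
      rw [Real.norm_eq_abs, abs_of_nonneg (mul_nonneg h1 (hFnn T hT x))]
      exact mul_le_mul_of_nonneg_left (hFle T hT x) h1
    · exact hIint.mul_const M
    · exact (ae_restrict_iff' measurableSet_Ioi).2 (Eventually.of_forall hglim)
  have hcinv : Tendsto (fun T => (∫ x in Ioi (0:ℝ),
      (β x * Real.exp (-∫ y in (0:ℝ)..x, β y)) * ∫ y in (x - T)..x, p0 y)⁻¹)
      atTop (nhds M⁻¹) := hc.inv₀ (ne_of_gt hMpos)
  have hcev : ∀ᶠ T in atTop, M / 2 < ∫ x in Ioi (0:ℝ),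
      (β x * Real.exp (-∫ y in (0:ℝ)..x, β y)) * ∫ y in (x - T)..x, p0 y :=
    hc.eventually (eventually_gt_nhds (by linarith))
  -- final dominated convergence
  have h00 : (nhds (0:ℝ)) = nhds (∫ _ in Ioi (0:ℝ), (0:ℝ)) := by simp
  rw [h00]
  refine tendsto_integral_filter_of_dominated_convergence
    (fun a => 3 * (β a * Real.exp (-∫ y in (0:ℝ)..a, β y))) ?_ ?_ ?_ ?_
  · filter_upwards [] with T
    have hP : Continuous (fun u => ∫ y in (0:ℝ)..u, p0 y) :=
      intervalIntegral.continuous_primitive hp0ii 0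
    have hBc : Continuous (fun u => ∫ y in (0:ℝ)..u, β y) :=
      intervalIntegral.continuous_primitive hβii 0
    have hFrepr : ∀ x : ℝ, (∫ y in (x - T)..x, p0 y)
        = (∫ y in (0:ℝ)..x, p0 y) - ∫ y in (0:ℝ)..(x - T), p0 y := by
      intro x
      rw [← intervalIntegral.integral_add_adjacent_intervals (hp0ii (x - T) 0) (hp0ii 0 x),
        intervalIntegral.integral_symm 0 (x - T)]
      ring
    have hIc : Continuous (fun a => β a * Real.exp (-∫ y in (0:ℝ)..a, β y)) :=
      hβc.mul (Real.continuous_exp.comp hBc.neg)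
    have : Continuous (fun a => (∫ x in Ioi (0:ℝ),
        (β x * Real.exp (-∫ y in (0:ℝ)..x, β y)) * ∫ y in (x - T)..x, p0 y)⁻¹ *
        ((β a * Real.exp (-∫ x in (0:ℝ)..a, β x)) * ∫ x in (a - T)..a, p0 x)
        - β a * Real.exp (-∫ x in (0:ℝ)..a, β x)) := by
      simp only [hFrepr]
      exact (continuous_const.mul (hIc.mul
        (hP.sub (hP.comp (continuous_id.sub continuous_const))))).sub hIc
    exact this.abs.aestronglyMeasurable
  · filter_upwards [eventually_ge_atTop (0:ℝ), hcev] with T hT hcT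
    refine (ae_restrict_iff' measurableSet_Ioi).2 (Eventually.of_forall (fun a ha => ?_))
    set x : ℝ := β a * Real.exp (-∫ y in (0:ℝ)..a, β y) with hxdef
    set f : ℝ := ∫ y in (a - T)..a, p0 y with hfdef
    set u : ℝ := ∫ y in Ioi (0:ℝ),
      (β y * Real.exp (-∫ z in (0:ℝ)..y, β z)) * ∫ z in (y - T)..y, p0 z with hudef
    have hx0 : 0 ≤ x := hInn a ha
    have hf0 : 0 ≤ f := hFnn T hT a
    have hfM : f ≤ M := hFle T hT a
    have hu0 : 0 < u := lt_trans (half_pos hMpos) hcT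
    have h2 : u⁻¹ ≤ 2 / M := by
      rw [← inv_div M 2]
      exact inv_anti₀ (half_pos hMpos) hcT.le
    have hub : u⁻¹ * (x * f) ≤ 2 * x := by
      calc u⁻¹ * (x * f) ≤ (2 / M) * (x * M) := by
            refine mul_le_mul h2 (mul_le_mul_of_nonneg_left hfM hx0)
              (mul_nonneg hx0 hf0) (by positivity)
        _ = 2 * x := by field_simp
    have hlb : 0 ≤ u⁻¹ * (x * f) := by positivity
    rw [Real.norm_eq_abs, abs_abs, abs_le]
    constructor <;> [nlinarith; nlinarith]
  · exact (hIint.const_mul 3)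
  · refine (ae_restrict_iff' measurableSet_Ioi).2 (Eventually.of_forall (fun a ha => ?_))
    have h := (hcinv.mul (hglim a ha)).sub
      (tendsto_const_nhds (x := β a * Real.exp (-∫ x in (0:ℝ)..a, β x)))
    have h2 := h.abs
    have hval : |M⁻¹ * ((β a * Real.exp (-∫ x in (0:ℝ)..a, β x)) * M)
        - β a * Real.exp (-∫ x in (0:ℝ)..a, β x)| = 0 := by
      rw [mul_comm (β a * Real.exp (-∫ x in (0:ℝ)..a, β x)) M, inv_mul_cancel_left₀
        (ne_of_gt hMpos), sub_self, abs_zero]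
    rwa [hval] at h2
end

section
/- Under the hypotheses of the previous L¹ convergence theorem, if additionally β(a)·exp(-∫₀^a β(a')da') → 0 as a → ∞, then sup_{a≥0} |I_T(a) - I_∞(a)| → 0 as T → ∞. -/
open MeasureTheory Filter Set

theorem imt_distribution_uniform_convergence
    (β p0 : ℝ → ℝ) (t0 : ℝ) (ht0 : 0 < t0)
    (hβc : Continuous β) (hβnn : ∀ a, 0 ≤ β a)
    (hβdiv : Tendsto (fun a => ∫ x in (0:ℝ)..a, β x) atTop atTop)
    (hβ0 : ∀ a, a ≤ t0 → β a = 0)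
    (hp0int : Integrable p0) (hp0nn : ∀ a, 0 ≤ p0 a)
    (hp0supp : ∀ a, a < 0 ∨ t0 < a → p0 a = 0)
    (hp0pos : 0 < ∫ a in Set.Ioi (0:ℝ), p0 a)
    (p : ℝ → ℝ → ℝ)
    (hp : ∀ t a, p t a = p0 (a - t) * Real.exp (-∫ s in (0:ℝ)..t, β (a - s)))
    (hβI0 : Tendsto (fun a => β a * Real.exp (-∫ x in (0:ℝ)..a, β x))
      atTop (nhds 0)) :
    ∀ ε > (0:ℝ), ∃ T₀ : ℝ, ∀ T ≥ T₀, ∀ a ≥ (0:ℝ),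
      |(∫ x in Set.Ioi (0:ℝ), ∫ t in (0:ℝ)..T, β x * p t x)⁻¹ *
          (∫ t in (0:ℝ)..T, β a * p t a)
        - β a * Real.exp (-∫ x in (0:ℝ)..a, β x)| < ε := by
  have hβint : ∀ u v : ℝ, IntervalIntegrable β volume u v := fun u v =>
    hβc.intervalIntegrable u v
  -- the primitive of β vanishes below t0
  have hBzero : ∀ u : ℝ, u ≤ t0 → (∫ x in (0:ℝ)..u, β x) = 0 := by
    intro u hu
    have h : EqOn β (fun _ => (0:ℝ)) (Set.uIcc 0 u) := by
      intro x hx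
      exact hβ0 x (le_trans hx.2 (max_le ht0.le hu))
    rw [intervalIntegral.integral_congr h, intervalIntegral.integral_zero]
  have hBcont : Continuous (fun u : ℝ => ∫ x in (0:ℝ)..u, β x) :=
    intervalIntegral.continuous_primitive hβint 0
  have hfcont : Continuous (fun a : ℝ => β a * Real.exp (-∫ x in (0:ℝ)..a, β x)) :=
    hβc.mul (Real.continuous_exp.comp hBcont.neg)
  have hfnn : ∀ a : ℝ, 0 ≤ β a * Real.exp (-∫ x in (0:ℝ)..a, β x) := fun a =>
    mul_nonneg (hβnn a) (Real.exp_pos _).le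
  have hE0 : Tendsto (fun u : ℝ => Real.exp (-∫ x in (0:ℝ)..u, β x)) atTop (nhds 0) :=
    Real.tendsto_exp_atBot.comp (tendsto_neg_atBot_iff.mpr hβdiv)
  -- FTC for the density
  have hEderiv : ∀ x : ℝ, HasDerivAt (fun u : ℝ => -Real.exp (-∫ t in (0:ℝ)..u, β t))
      (β x * Real.exp (-∫ t in (0:ℝ)..x, β t)) x := by
    intro x
    have h1 : HasDerivAt (fun u : ℝ => ∫ t in (0:ℝ)..u, β t) (β x) x :=
      intervalIntegral.integral_hasDerivAt_right (hβint 0 x)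
        (hβc.stronglyMeasurable.stronglyMeasurableAtFilter) hβc.continuousAt
    have h2 : HasDerivAt (fun u : ℝ => -Real.exp (-∫ t in (0:ℝ)..u, β t))
        (-(Real.exp (-∫ t in (0:ℝ)..x, β t) * -β x)) x := (h1.neg.exp).neg
    convert h2 using 1
    ring
  have hFTC : ∀ u v : ℝ, (∫ x in u..v, β x * Real.exp (-∫ t in (0:ℝ)..x, β t))
      = Real.exp (-∫ t in (0:ℝ)..u, β t) - Real.exp (-∫ t in (0:ℝ)..v, β t) := by
    intro u v
    rw [intervalIntegral.integral_eq_sub_of_hasDerivAt (fun x _ => hEderiv x)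
      (hfcont.intervalIntegrable u v)]
    ring
  -- key pointwise identity
  have hkey : ∀ t a : ℝ, β a * p t a
      = (β a * Real.exp (-∫ x in (0:ℝ)..a, β x)) * p0 (a - t) := by
    intro t a
    rw [hp]
    by_cases h : p0 (a - t) = 0
    · rw [h]; ring
    · have hsupp : ¬(a - t < 0 ∨ t0 < a - t) := fun hc => h (hp0supp _ hc)
      push_neg at hsupp
      have h1 : (∫ s in (0:ℝ)..t, β (a - s)) = ∫ x in (a - t)..(a - 0), β x :=
        intervalIntegral.integral_comp_sub_left β a
      have h2 : (∫ x in (a - t)..a, β x)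
          = (∫ x in (0:ℝ)..a, β x) - ∫ x in (0:ℝ)..(a - t), β x :=
        (intervalIntegral.integral_interval_sub_left (hβint 0 a) (hβint 0 (a - t))).symm
      rw [h1, sub_zero, h2, hBzero _ hsupp.2, sub_zero]
      ring
  -- the inner integral
  have hInner : ∀ T a : ℝ, (∫ t in (0:ℝ)..T, β a * p t a)
      = (β a * Real.exp (-∫ x in (0:ℝ)..a, β x)) * ∫ u in (a - T)..a, p0 u := by
    intro T a
    have h1 : (∫ t in (0:ℝ)..T, β a * p t a)
        = ∫ t in (0:ℝ)..T, (β a * Real.exp (-∫ x in (0:ℝ)..a, β x)) * p0 (a - t) :=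
      intervalIntegral.integral_congr fun t _ => hkey t a
    rw [h1, intervalIntegral.integral_const_mul]
    congr 1
    have h2 : (∫ t in (0:ℝ)..T, p0 (a - t)) = ∫ x in (a - T)..(a - 0), p0 x :=
      intervalIntegral.integral_comp_sub_left p0 a
    rw [h2, sub_zero]
  have haez : ∀ᵐ x : ℝ, x ≠ (0:ℝ) := by
    have h0 : (volume : Measure ℝ) {(0:ℝ)} = 0 := measure_singleton 0
    rw [ae_iff]
    simpa using h0
  -- total mass of p0
  have hMeq : (∫ x in Set.Ioi (0:ℝ), p0 x) = ∫ x, p0 x := by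
    have hIic : (∫ x in Set.Iic (0:ℝ), p0 x) = 0 := by
      have h0 : ∀ᵐ x : ℝ, x ∈ Set.Iic (0:ℝ) → p0 x = (fun _ => (0:ℝ)) x := by
        filter_upwards [haez] with x hx hmem
        exact hp0supp x (Or.inl (lt_of_le_of_ne hmem hx))
      rw [setIntegral_congr_ae measurableSet_Iic h0, integral_zero]
    have h : (∫ x in Set.Iic (0:ℝ), p0 x) + ∫ x in (Set.Iic (0:ℝ))ᶜ, p0 x = ∫ x, p0 x :=
      integral_add_compl measurableSet_Iic hp0int
    rw [compl_Iic] at h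
    linarith
  have hQnn : ∀ a T : ℝ, 0 ≤ T → 0 ≤ ∫ u in (a - T)..a, p0 u := fun a T hT =>
    intervalIntegral.integral_nonneg (by linarith) fun u _ => hp0nn u
  have hQle : ∀ a T : ℝ, 0 ≤ T →
      (∫ u in (a - T)..a, p0 u) ≤ ∫ x in Set.Ioi (0:ℝ), p0 x := by
    intro a T hT
    rw [hMeq, intervalIntegral.integral_of_le (by linarith : a - T ≤ a)]
    exact setIntegral_le_integral hp0int (Filter.Eventually.of_forall hp0nn)
  have hQfull : ∀ a T : ℝ, t0 ≤ a → a - T ≤ 0 →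
      (∫ u in (a - T)..a, p0 u) = ∫ x in Set.Ioi (0:ℝ), p0 x := by
    intro a T h1 h2
    rw [hMeq, intervalIntegral.integral_of_le (by linarith : a - T ≤ a)]
    have hcompl : (∫ x in (Set.Ioc (a - T) a)ᶜ, p0 x) = 0 := by
      have h0 : ∀ᵐ x : ℝ, x ∈ (Set.Ioc (a - T) a)ᶜ → p0 x = (fun _ => (0:ℝ)) x := by
        filter_upwards [haez] with x hx hmem
        rw [Set.mem_compl_iff, Set.mem_Ioc, not_and_or, not_lt, not_le] at hmem
        rcases hmem with h | h
        · exact hp0supp x (Or.inl (lt_of_le_of_ne (le_trans h h2) hx))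
        · exact hp0supp x (Or.inr (lt_of_le_of_lt h1 h))
      rw [setIntegral_congr_ae measurableSet_Ioc.compl h0, integral_zero]
    have h : (∫ x in Set.Ioc (a - T) a, p0 x) + ∫ x in (Set.Ioc (a - T) a)ᶜ, p0 x
        = ∫ x, p0 x := integral_add_compl measurableSet_Ioc hp0int
    linarith
  -- continuity of Q
  have hQcont : ∀ T : ℝ, Continuous (fun x : ℝ => ∫ u in (x - T)..x, p0 u) := by
    intro T
    have hPcont : Continuous (fun x : ℝ => ∫ u in (0:ℝ)..x, p0 u) :=
      intervalIntegral.continuous_primitive (fun u v => hp0int.intervalIntegrable) 0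
    have h : ∀ x : ℝ, (∫ u in (x - T)..x, p0 u)
        = (∫ u in (0:ℝ)..x, p0 u) - ∫ u in (0:ℝ)..(x - T), p0 u := fun x =>
      (intervalIntegral.integral_interval_sub_left hp0int.intervalIntegrable
        hp0int.intervalIntegrable).symm
    simp only [h]
    exact hPcont.sub (hPcont.comp (continuous_id.sub continuous_const))
  -- f is integrable on (0, ∞) with integral 1
  have hfIoi : IntegrableOn (fun a : ℝ => β a * Real.exp (-∫ x in (0:ℝ)..a, β x))
      (Set.Ioi (0:ℝ)) volume := by
    apply integrableOn_Ioi_of_intervalIntegral_norm_bounded 1 0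
      (fun i : ℝ => hfcont.integrableOn_Ioc) tendsto_id
    filter_upwards [eventually_ge_atTop (0:ℝ)] with i _
    simp only [id_eq]
    have h : (∫ x in (0:ℝ)..i, ‖β x * Real.exp (-∫ t in (0:ℝ)..x, β t)‖)
        = ∫ x in (0:ℝ)..i, β x * Real.exp (-∫ t in (0:ℝ)..x, β t) :=
      intervalIntegral.integral_congr fun x _ => Real.norm_of_nonneg (hfnn x)
    rw [h, hFTC 0 i, hBzero 0 ht0.le, neg_zero, Real.exp_zero]
    have := (Real.exp_pos (-∫ t in (0:ℝ)..i, β t)).le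
    linarith
  have hfI : (∫ x in Set.Ioi (0:ℝ), β x * Real.exp (-∫ t in (0:ℝ)..x, β t)) = 1 := by
    have h1 := intervalIntegral_tendsto_integral_Ioi 0 hfIoi tendsto_id
    have h2 : Tendsto (fun i : ℝ => ∫ x in (0:ℝ)..i, β x * Real.exp (-∫ t in (0:ℝ)..x, β t))
        atTop (nhds 1) := by
      simp only [hFTC, hBzero 0 ht0.le, neg_zero, Real.exp_zero]
      simpa using tendsto_const_nhds.sub hE0
    exact tendsto_nhds_unique h1 h2
  -- bound on f
  have hKex : ∃ K : ℝ, 0 ≤ K ∧ ∀ a : ℝ, β a * Real.exp (-∫ x in (0:ℝ)..a, β x) ≤ K := by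
    obtain ⟨R, hR⟩ := eventually_atTop.mp (hβI0.eventually (gt_mem_nhds one_pos))
    obtain ⟨Cb, hCb⟩ := (isCompact_Icc (a := t0) (b := R)).exists_bound_of_continuousOn
      hfcont.continuousOn
    refine ⟨max Cb 1, le_trans zero_le_one (le_max_right _ _), fun a => ?_⟩
    rcases le_or_gt a t0 with h | h
    · rw [hβ0 a h, zero_mul]
      exact le_trans zero_le_one (le_max_right _ _)
    rcases le_or_gt a R with h2 | h2
    · exact le_trans (le_trans (le_abs_self _)
        ((Real.norm_eq_abs _) ▸ hCb a ⟨h.le, h2⟩)) (le_max_left _ _)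
    · exact le_trans (hR a h2.le).le (le_max_right _ _)
  obtain ⟨K, hK0, hKb⟩ := hKex
  intro ε hε
  have hδpos : 0 < min (1/2 : ℝ) (ε / (2 * (K + 1))) :=
    lt_min one_half_pos (div_pos hε (by positivity))
  obtain ⟨R₁, hR₁⟩ := eventually_atTop.mp (hE0.eventually (gt_mem_nhds hδpos))
  obtain ⟨R₂, hR₂⟩ := eventually_atTop.mp (hβI0.eventually (gt_mem_nhds
    (by positivity : (0:ℝ) < ε / 3)))
  refine ⟨max (max R₁ R₂) (t0 + 1), fun T hT a ha => ?_⟩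
  have hTt0 : t0 < T := by
    have := le_trans (le_max_right (max R₁ R₂) (t0 + 1)) hT
    linarith
  have hT0 : 0 < T := lt_trans ht0 hTt0
  have hET : Real.exp (-∫ x in (0:ℝ)..T, β x) < min (1/2 : ℝ) (ε / (2 * (K + 1))) :=
    hR₁ T (le_trans (le_trans (le_max_left _ _) (le_max_left _ _)) hT)
  have hET2 : Real.exp (-∫ x in (0:ℝ)..T, β x) < 1/2 := lt_of_lt_of_le hET (min_le_left _ _)
  have hETε : Real.exp (-∫ x in (0:ℝ)..T, β x) < ε / (2 * (K + 1)) :=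
    lt_of_lt_of_le hET (min_le_right _ _)
  have hETpos : 0 < Real.exp (-∫ x in (0:ℝ)..T, β x) := Real.exp_pos _
  set M : ℝ := ∫ x in Set.Ioi (0:ℝ), p0 x with hMdef
  have hM : 0 < M := hp0pos
  -- rewrite the normalizing constant
  have hC : (∫ x in Set.Ioi (0:ℝ), ∫ t in (0:ℝ)..T, β x * p t x)
      = ∫ x in Set.Ioi (0:ℝ),
          (β x * Real.exp (-∫ y in (0:ℝ)..x, β y)) * ∫ u in (x - T)..x, p0 u :=
    setIntegral_congr_fun measurableSet_Ioi fun x _ => hInner T x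
  rw [hC, hInner T a]
  set C : ℝ := ∫ x in Set.Ioi (0:ℝ),
      (β x * Real.exp (-∫ y in (0:ℝ)..x, β y)) * ∫ u in (x - T)..x, p0 u with hCdef
  set Ea : ℝ := β a * Real.exp (-∫ x in (0:ℝ)..a, β x) with hEadef
  set Q : ℝ := ∫ u in (a - T)..a, p0 u with hQdef
  have hEann : 0 ≤ Ea := hfnn a
  have hEaK : Ea ≤ K := hKb a
  have hQnn' : 0 ≤ Q := hQnn a T hT0.le
  have hQle' : Q ≤ M := hQle a T hT0.le
  -- integrability of the integrand of C
  have hfQint : IntegrableOn (fun x : ℝ =>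
      (β x * Real.exp (-∫ y in (0:ℝ)..x, β y)) * ∫ u in (x - T)..x, p0 u)
      (Set.Ioi (0:ℝ)) volume := by
    apply Integrable.mono (hfIoi.const_mul M)
      ((hfcont.mul (hQcont T)).aestronglyMeasurable.restrict)
    filter_upwards [] with x
    simp only [Pi.mul_apply]
    rw [Real.norm_eq_abs, Real.norm_eq_abs,
      abs_of_nonneg (mul_nonneg (hfnn x) (hQnn x T hT0.le)),
      abs_of_nonneg (mul_nonneg hM.le (hfnn x))]
    calc (β x * Real.exp (-∫ y in (0:ℝ)..x, β y)) * ∫ u in (x - T)..x, p0 u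
        ≤ (β x * Real.exp (-∫ y in (0:ℝ)..x, β y)) * M :=
          mul_le_mul_of_nonneg_left (hQle x T hT0.le) (hfnn x)
      _ = M * (β x * Real.exp (-∫ y in (0:ℝ)..x, β y)) := mul_comm _ _
  -- upper bound for C
  have hCub : C ≤ M := by
    have h1 : C ≤ ∫ x in Set.Ioi (0:ℝ), (β x * Real.exp (-∫ y in (0:ℝ)..x, β y)) * M := by
      apply integral_mono hfQint (hfIoi.mul_const M)
      intro x
      exact mul_le_mul_of_nonneg_left (hQle x T hT0.le) (hfnn x)
    rw [integral_mul_const, hfI, one_mul] at h1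
    exact h1
  -- lower bound for C
  have hClb : M * (1 - Real.exp (-∫ x in (0:ℝ)..T, β x)) ≤ C := by
    have hsub : Set.Ioc t0 T ⊆ Set.Ioi (0:ℝ) := fun x hx => lt_trans ht0 hx.1
    have h1 : (∫ x in Set.Ioc t0 T,
        (β x * Real.exp (-∫ y in (0:ℝ)..x, β y)) * ∫ u in (x - T)..x, p0 u) ≤ C := by
      apply setIntegral_mono_set hfQint
      · filter_upwards [] with x
        exact mul_nonneg (hfnn x) (hQnn x T hT0.le)
      · exact Filter.Eventually.of_forall hsub
    have h2 : (∫ x in Set.Ioc t0 T,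
        (β x * Real.exp (-∫ y in (0:ℝ)..x, β y)) * ∫ u in (x - T)..x, p0 u)
        = ∫ x in Set.Ioc t0 T, (β x * Real.exp (-∫ y in (0:ℝ)..x, β y)) * M := by
      apply setIntegral_congr_fun measurableSet_Ioc
      intro x hx
      simp only [hQfull x T hx.1.le (by linarith [hx.2] : x - T ≤ 0)]
    have h3 : (∫ x in Set.Ioc t0 T, (β x * Real.exp (-∫ y in (0:ℝ)..x, β y)) * M)
        = (Real.exp (-∫ y in (0:ℝ)..t0, β y) - Real.exp (-∫ y in (0:ℝ)..T, β y)) * M := by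
      rw [integral_mul_const, ← intervalIntegral.integral_of_le hTt0.le, hFTC t0 T]
    rw [h2, h3, hBzero t0 le_rfl, neg_zero, Real.exp_zero] at h1
    linarith
  have hCpos : 0 < C := by
    have := mul_pos hM (show (0:ℝ) < 1 - Real.exp (-∫ x in (0:ℝ)..T, β x) by linarith)
    linarith only [hClb, this]
  have hEa0 : a ≤ t0 → Ea = 0 := fun h => by rw [hEadef, hβ0 a h, zero_mul]
  have hQM : t0 < a → a ≤ T → Q = M := fun h1 h2 => hQfull a T h1.le (by linarith)
  have hEasmall : T < a → Ea < ε / 3 := fun h => hR₂ a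
    (le_trans (le_trans (le_max_right _ _) (le_max_left _ _)) (le_trans hT h.le))
  have hδ2 : (2 * (K + 1)) * Real.exp (-∫ x in (0:ℝ)..T, β x) < ε := by
    rw [← lt_div_iff₀' (by positivity : (0:ℝ) < 2 * (K + 1))]
    exact hETε
  set ET : ℝ := Real.exp (-∫ x in (0:ℝ)..T, β x) with hETdef
  clear_value C Ea Q M ET
  rcases le_or_gt a t0 with hat0 | hat0
  · rw [hEa0 hat0]
    simpa using hε
  rcases le_or_gt a T with haT | haT
  · -- middle region : Q = M
    rw [hQM hat0 haT]
    have hkey2 : C⁻¹ * (Ea * M) - Ea = Ea * (M - C) / C := by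
      field_simp
    rw [hkey2, abs_of_nonneg
      (div_nonneg (mul_nonneg hEann (by linarith : (0:ℝ) ≤ M - C)) hCpos.le),
      div_lt_iff₀ hCpos]
    have h1 : Ea * (M - C) ≤ K * (M - C) :=
      mul_le_mul_of_nonneg_right hEaK (by linarith)
    have h2 : M - C ≤ M * ET := by linarith
    have h3 : K * (M - C) ≤ K * (M * ET) := mul_le_mul_of_nonneg_left h2 hK0
    have h4 : ε * (M * (1 - ET)) ≤ ε * C := mul_le_mul_of_nonneg_left hClb hε.le
    have h6 : (2 * (K + 1) * ET) * (M / 2) < ε * (M / 2) :=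
      mul_lt_mul_of_pos_right hδ2 (by linarith)
    have h8 : 0 < M * ET := mul_pos hM hETpos
    have h9 : 0 ≤ (ε * M) * (1/2 - ET) :=
      mul_nonneg (mul_nonneg hε.le hM.le) (by linarith)
    linarith only [h1, h3, h4, h6, h8, h9]
  · -- far region : a > T
    have hEs := hEasmall haT
    have hM2C : M ≤ 2 * C := by
      have h9 : 0 ≤ M * (1/2 - ET) := mul_nonneg hM.le (by linarith)
      linarith only [hClb, h9]
    have hx : C⁻¹ * (Ea * Q) ≤ 2 * Ea := by
      rw [inv_mul_eq_div, div_le_iff₀ hCpos]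
      linarith only [mul_le_mul_of_nonneg_left hQle' hEann,
        mul_le_mul_of_nonneg_left hM2C hEann]
    have hxnn : 0 ≤ C⁻¹ * (Ea * Q) :=
      mul_nonneg (inv_nonneg.mpr hCpos.le) (mul_nonneg hEann hQnn')
    rw [abs_sub_lt_iff]
    exact ⟨by linarith, by linarith⟩
end
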